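/- With B_s, B_1 and ψ_1 as defined, ψ_1 commutes with the tensor-product crystal operator f̃_1: for all b ∈ B_s × B_1, ψ_1(f̃_1 b) = f̃_1(ψ_1 b), where f̃_1 on a tensor product b_1 ⊗ b_2 acts on b_1 if φ_1(b_1) > ε_1(b_2) and on b_2 otherwise, with the convention ψ_1(0) = 0. -/

import Mathlib

/-- `ψ₁ : B_s ⊗ B_1 → B_1 ⊗ B_s`, with `B_s = Fin (s+1)`, `B_1 = Bool` (`+ ↔ false`, `- ↔ true`). -/
def psi1 (s : ℕ) : Fin (s + 1) × Bool → Bool × Fin (s + 1) := fun p =>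
  match p with
  | (j, false) =>
      if _h : j.val = 0 then (false, j)
      else (true, ⟨j.val - 1, by have := j.isLt; omega⟩)
  | (j, true) =>
      if _h : j.val = s then (true, j)
      else (false, ⟨j.val + 1, by have := j.isLt; omega⟩)

/-- `f̃₁` on `B_s`: `j ↦ j+1` for `0 ≤ j ≤ s-1`, else `0`. -/
def ftS (s : ℕ) (j : Fin (s + 1)) : Option (Fin (s + 1)) :=
  if h : j.val < s then some ⟨j.val + 1, by omega⟩ else none

/-- `f̃₁` on `B_1`: `+ ↦ -`, `- ↦ 0`. -/
def ftB : Bool → Option Bool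
  | false => some true
  | true => none

/-- `φ₁` on `B_s`: `φ₁(j) = s - j`. -/
def phiS (s : ℕ) (j : Fin (s + 1)) : ℕ := s - j.val

/-- `ε₁` on `B_s`: `ε₁(j) = j`. -/
def epsS (s : ℕ) (j : Fin (s + 1)) : ℕ := j.val

/-- `φ₁` on `B_1`. -/
def phiB : Bool → ℕ
  | false => 1
  | true => 0

/-- `ε₁` on `B_1`. -/
def epsB : Bool → ℕ
  | false => 0
  | true => 1

/-- Tensor-product operator `f̃₁` on `B_s ⊗ B_1`. -/
def ftSB (s : ℕ) (p : Fin (s + 1) × Bool) : Option (Fin (s + 1) × Bool) :=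
  if phiS s p.1 > epsB p.2 then (ftS s p.1).map (fun j' => (j', p.2))
  else (ftB p.2).map (fun b' => (p.1, b'))

/-- Tensor-product operator `f̃₁` on `B_1 ⊗ B_s`. -/
def ftBS (s : ℕ) (p : Bool × Fin (s + 1)) : Option (Bool × Fin (s + 1)) :=
  if phiB p.1 > epsS s p.2 then (ftB p.1).map (fun b' => (b', p.2))
  else (ftS s p.2).map (fun j' => (p.1, j'))

/-- `ψ₁` commutes with the tensor-product crystal operator `f̃₁`:
`ψ₁(f̃₁ b) = f̃₁(ψ₁ b)` for all `b ∈ B_s ⊗ B_1`, with the convention `ψ₁(0) = 0`. -/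
theorem psi1_commutes_ft1 (s : ℕ) :
    ∀ p : Fin (s + 1) × Bool, (ftSB s p).map (psi1 s) = ftBS s (psi1 s p) := by
  rintro ⟨j, b⟩
  cases b <;>
  · simp only [ftSB, ftBS, ftS, ftB, psi1, phiS, epsS, phiB, epsB]
    split_ifs <;>
      simp_all [psi1, Option.map, Fin.ext_iff, -Fin.val_eq_zero_iff]
    all_goals
      try simp only [show ∀ (a : Bool) (x : Fin (s+1)), (a, x).2 = x from fun _ _ => rfl] at *
      try split_ifs
      all_goals try simp_all [Fin.ext_iff, -Fin.val_eq_zero_iff]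
      all_goals omega
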